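/- Suppose each objective f_i (i = 1, …, T) is M_f-relatively Lipschitz continuous and μ-relatively strongly convex w.r.t. h with μ > 0, and the constraint g is M_g-relatively Lipschitz continuous and μ-relatively strongly convex w.r.t. h. Set M = max(M_f, M_g) and ε = (M²/μ)·(1 + ln T)/T. If the switching mirror-descent algorithm with step sizes η_t = 1/(μ·t) performs exactly T productive steps and Regret_T ≥ 0, then there exists a constant C ∈ (2, 3) such that the number of non-productive steps satisfies T_J ≤ C·T, and moreover Regret_T ≤ (M²/μ)·(1 + ln((C+1)·T)), while g(x_t) ≤ ε at every productive step t. -/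

import Mathlib

open scoped RealInnerProductSpace
open Finset

/-- The Bregman divergence `V(y,x) = h(y) − h(x) − ⟨∇h(x), y − x⟩`. -/
noncomputable def breg {E : Type*} [NormedAddCommGroup E] [InnerProductSpace ℝ E]
    [CompleteSpace E] (h : E → ℝ) (y x : E) : ℝ :=
  h y - h x - ⟪gradient h x, y - x⟫

/-- `f` is `M`-relatively Lipschitz continuous w.r.t. the prox-function `h` on `Q`. -/
noncomputable def RelLipschitz {E : Type*} [NormedAddCommGroup E] [InnerProductSpace ℝ E]
    [CompleteSpace E] (h : E → ℝ) (Q : Set E) (M : ℝ) (f : E → ℝ) : Prop :=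
  ∀ x ∈ Q, ∀ y ∈ Q, 0 ≤ ⟪gradient f x, y - x⟫ + M * Real.sqrt (2 * breg h y x)

/-- `f` is `μ`-relatively strongly convex w.r.t. the prox-function `h` on `Q`. -/
noncomputable def RelStrongConvex {E : Type*} [NormedAddCommGroup E] [InnerProductSpace ℝ E]
    [CompleteSpace E] (h : E → ℝ) (Q : Set E) (μ : ℝ) (f : E → ℝ) : Prop :=
  ∀ x ∈ Q, ∀ y ∈ Q, f y + ⟪gradient f y, x - y⟫ + μ * breg h x y ≤ f x

/-- One mirror-descent step from `x` with step size `η` in the direction `v`: there is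
`y` with `∇h(y) = ∇h(x) − η·v`, and the next iterate `x'` is the Bregman projection of
`y` onto `Q`. -/
noncomputable def MDStepV {E : Type*} [NormedAddCommGroup E] [InnerProductSpace ℝ E]
    [CompleteSpace E] (h : E → ℝ) (Q : Set E) (η : ℝ) (v : E) (x x' : E) : Prop :=
  ∃ y : E, gradient h y = gradient h x - η • v ∧ x' ∈ Q ∧
    IsMinOn (fun z => breg h z y) Q x'


section SwitchingMDAux
variable {E : Type*} [NormedAddCommGroup E] [InnerProductSpace ℝ E] [CompleteSpace E]

private lemma hasDerivAt_comp_line' (ψ : E → ℝ) (hψ : Differentiable ℝ ψ) (x v : E) (t : ℝ) :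
    HasDerivAt (fun s : ℝ => ψ (x + s • v)) ⟪gradient ψ (x + t • v), v⟫ t := by
  have hline : HasDerivAt (fun s : ℝ => x + s • v) v t := by
    simpa using ((hasDerivAt_id t).smul_const v).const_add x
  have hg := (hψ (x + t • v)).hasGradientAt.hasFDerivAt
  have := hg.comp_hasDerivAt t hline
  simp [InnerProductSpace.toDual_apply_apply] at this ⊢
  exact this

private lemma grad_ineq' (ψ : E → ℝ) (hψ : Differentiable ℝ ψ) (hc : ConvexOn ℝ Set.univ ψ)
    (x y : E) : ψ x + ⟪gradient ψ x, y - x⟫ ≤ ψ y := by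
  have hφc : ConvexOn ℝ Set.univ (fun s : ℝ => ψ (x + s • (y - x))) := by
    have h1 := hc.comp_affineMap (AffineMap.lineMap x y : ℝ →ᵃ[ℝ] E)
    have he : (ψ ∘ ⇑(AffineMap.lineMap x y)) = fun s : ℝ => ψ (x + s • (y - x)) := by
      funext s
      simp [Function.comp, AffineMap.lineMap_apply_module', add_comm]
    rw [he] at h1
    simpa using h1
  have hd : HasDerivAt (fun s : ℝ => ψ (x + s • (y - x))) ⟪gradient ψ x, y - x⟫ 0 := by
    simpa using hasDerivAt_comp_line' ψ hψ x (y - x) 0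
  have := hφc.le_slope_of_hasDerivAt (Set.mem_univ 0) (Set.mem_univ 1) one_pos hd
  simp [slope_def_field] at this
  simp
  linarith

private lemma breg_nonneg' (h : E → ℝ) (hdiff : Differentiable ℝ h)
    (hconv : ConvexOn ℝ Set.univ h) (y x : E) : 0 ≤ breg h y x := by
  have := grad_ineq' h hdiff hconv x y
  simp only [breg]; linarith

private lemma varineq' (Q : Set E) (hQc : Convex ℝ Q) (ψ : E → ℝ) (hψ : Differentiable ℝ ψ)
    {x' u : E} (hx' : x' ∈ Q) (hu : u ∈ Q) (hmin : IsMinOn ψ Q x') :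
    0 ≤ ⟪gradient ψ x', u - x'⟫ := by
  have hd : HasDerivAt (fun s : ℝ => ψ (x' + s • (u - x'))) ⟪gradient ψ x', u - x'⟫ 0 := by
    simpa using hasDerivAt_comp_line' ψ hψ x' (u - x') 0
  have htend := hasDerivAt_iff_tendsto_slope.1 hd
  have htend' : Filter.Tendsto (slope (fun s : ℝ => ψ (x' + s • (u - x'))) 0)
      (nhdsWithin 0 (Set.Ioi 0)) (nhds ⟪gradient ψ x', u - x'⟫) :=
    htend.mono_left (nhdsWithin_mono _ (fun t ht => ne_of_gt ht))
  refine ge_of_tendsto htend' ?_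
  filter_upwards [Ioo_mem_nhdsGT_of_mem (by norm_num : (0:ℝ) ∈ Set.Ico (0:ℝ) 1)] with t ht
  have hmem : x' + t • (u - x') ∈ Q := by
    have h2 := hQc hx' hu (by linarith [ht.2] : (0:ℝ) ≤ 1 - t) (le_of_lt ht.1) (by ring)
    have : (1 - t) • x' + t • u = x' + t • (u - x') := by
      rw [smul_sub, sub_smul, one_smul]; abel
    rwa [this] at h2
  have hle : ψ x' ≤ ψ (x' + t • (u - x')) := hmin hmem
  have hsl : slope (fun s : ℝ => ψ (x' + s • (u - x'))) 0 t
      = (ψ (x' + t • (u - x')) - ψ x') / t := by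
    simp [slope_def_field]
  rw [hsl]
  exact div_nonneg (by linarith) (le_of_lt ht.1)

private lemma hasGradientAt_breg' (h : E → ℝ) (hdiff : Differentiable ℝ h) (y z : E) :
    HasGradientAt (fun w => breg h w y) (gradient h z - gradient h y) z := by
  have h1 : HasFDerivAt h (InnerProductSpace.toDual ℝ E (gradient h z)) z :=
    (hdiff z).hasGradientAt.hasFDerivAt
  have he : (InnerProductSpace.toDual ℝ E) (gradient h y) = innerSL ℝ (gradient h y) := by
    ext w; simp [InnerProductSpace.toDual_apply_apply]
  have h2 : HasFDerivAt (fun w : E => (⟪gradient h y, w - y⟫ : ℝ))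
      ((InnerProductSpace.toDual ℝ E) (gradient h y)) z := by
    rw [he]
    have h3 : HasFDerivAt (fun w : E => (⟪gradient h y, w⟫ : ℝ)) (innerSL ℝ (gradient h y)) z :=
      (innerSL ℝ (gradient h y)).hasFDerivAt
    have h4 := h3.sub_const (⟪gradient h y, y⟫ : ℝ)
    have h5 : (fun w : E => (⟪gradient h y, w - y⟫ : ℝ))
        = fun w : E => (⟪gradient h y, w⟫ : ℝ) - ⟪gradient h y, y⟫ := by
      funext w; rw [inner_sub_right]
    rw [h5]; exact h4
  have h5 := (h1.sub_const (h y)).sub h2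
  rw [hasGradientAt_iff_hasFDerivAt]
  have h6 : (fun w => breg h w y) = fun w => (h w - h y) - (⟪gradient h y, w - y⟫ : ℝ) := by
    funext w; simp [breg]
  rw [h6, map_sub]
  exact h5

private lemma gradient_breg' (h : E → ℝ) (hdiff : Differentiable ℝ h) (y z : E) :
    gradient (fun w => breg h w y) z = gradient h z - gradient h y :=
  (hasGradientAt_breg' h hdiff y z).gradient

private lemma md_step_key (Q : Set E) (hQconv : Convex ℝ Q)
    (h : E → ℝ) (hdiff : Differentiable ℝ h) (hconv : ConvexOn ℝ Set.univ h)
    (φ : E → ℝ) (M μ η : ℝ) (hη : 0 < η)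
    (hLip : RelLipschitz h Q M φ) (hSC : RelStrongConvex h Q μ φ)
    {x x' u : E} (hx : x ∈ Q) (hu : u ∈ Q)
    (hstep : MDStepV h Q η (gradient φ x) x x') :
    η * (φ x - φ u) ≤ (1 - η * μ) * breg h u x - breg h u x' + η ^ 2 * M ^ 2 / 2 := by
  obtain ⟨y, hy, hx'Q, hmin⟩ := hstep
  have hψdiff : Differentiable ℝ (fun w => breg h w y) := fun w =>
    ((hasGradientAt_breg' h hdiff y w).hasFDerivAt.differentiableAt)
  have hvar : (0:ℝ) ≤ ⟪gradient h x' - gradient h y, u - x'⟫ := by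
    have := varineq' Q hQconv (fun w => breg h w y) hψdiff hx'Q hu hmin
    rwa [gradient_breg' h hdiff y x'] at this
  rw [hy] at hvar
  have h3pt : ⟪gradient h x, x'⟫ - ⟪gradient h x, u⟫ - ⟪gradient h x', x'⟫
      + ⟪gradient h x', u⟫ = breg h u x - breg h u x' - breg h x' x := by
    simp only [breg, inner_sub_right]; ring
  have hVnn : 0 ≤ breg h x' x := breg_nonneg' h hdiff hconv x' x
  have hs2 : Real.sqrt (2 * breg h x' x) ^ 2 = 2 * breg h x' x :=
    Real.sq_sqrt (by linarith)
  have hlip := hLip x hx x' hx'Q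
  have hlip2 : η * ⟪gradient φ x, x⟫ - η * ⟪gradient φ x, x'⟫
      ≤ η ^ 2 * M ^ 2 / 2 + breg h x' x := by
    have h1 : ⟪gradient φ x, x⟫ - ⟪gradient φ x, x'⟫ ≤ M * Real.sqrt (2 * breg h x' x) := by
      rw [inner_sub_right] at hlip; linarith
    have h2 : η * (⟪gradient φ x, x⟫ - ⟪gradient φ x, x'⟫)
        ≤ η * (M * Real.sqrt (2 * breg h x' x)) :=
      mul_le_mul_of_nonneg_left h1 hη.le
    nlinarith [sq_nonneg (η * M - Real.sqrt (2 * breg h x' x))]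
  have hsc := hSC u hu x hx
  have hsc' : η * (φ x + ⟪gradient φ x, u - x⟫ + μ * breg h u x) ≤ η * φ u :=
    mul_le_mul_of_nonneg_left hsc hη.le
  simp only [inner_sub_left, inner_sub_right, real_inner_smul_left] at hvar hsc'
  nlinarith [hvar, hsc', hlip2, h3pt]

end SwitchingMDAux


/-- Theorem 1 (switching Mirror Descent for relatively Lipschitz-continuous and relatively
strongly convex constrained online optimization): with `η_t = 1/(μ·t)` and
`ε = (M²/μ)·(1 + ln T)/T`, if the run makes exactly `T` productive steps (the `i`-th at
step index `σ i`, using objective `f i`) and `T_J` non-productive steps and the regret is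
nonnegative, then `g(x_t) ≤ ε` at every productive step, and there is a constant
`C ∈ (2, 3)` with `T_J ≤ C·T` and `Regret_T ≤ (M²/μ)·(1 + ln((C+1)·T))`. -/


theorem switching_mirror_descent_regret
    {E : Type*} [NormedAddCommGroup E] [InnerProductSpace ℝ E] [FiniteDimensional ℝ E]
    (Q : Set E) (hQne : Q.Nonempty) (hQclosed : IsClosed Q) (hQconv : Convex ℝ Q)
    (h : E → ℝ) (hdiff : Differentiable ℝ h) (hconv : ConvexOn ℝ Set.univ h)
    (T TJ : ℕ) (hT : 0 < T)
    (f : Fin T → E → ℝ) (g : E → ℝ)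
    (hfdiff : ∀ i, Differentiable ℝ (f i)) (hgdiff : Differentiable ℝ g)
    (hfconv : ∀ i, ConvexOn ℝ Set.univ (f i)) (hgconv : ConvexOn ℝ Set.univ g)
    (Mf Mg μ : ℝ) (hμ : 0 < μ)
    (hfLip : ∀ i, RelLipschitz h Q Mf (f i)) (hgLip : RelLipschitz h Q Mg g)
    (hfSC : ∀ i, RelStrongConvex h Q μ (f i)) (hgSC : RelStrongConvex h Q μ g)
    (M ε : ℝ) (hM : M = max Mf Mg)
    (hε : ε = M ^ 2 / μ * ((1 + Real.log T) / T))
    -- the iterates and the run of the switching algorithm: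
    (x : ℕ → E) (hx1 : x 1 ∈ Q)
    (σ : Fin T → ℕ) (hσmono : StrictMono σ)
    (hσrange : ∀ i, σ i ∈ Finset.Icc 1 (T + TJ))
    (hproductive : ∀ t ∈ Finset.Icc 1 (T + TJ), (g (x t) ≤ ε ↔ ∃ i, σ i = t))
    (hstepP : ∀ i : Fin T,
      MDStepV h Q (1 / (μ * σ i)) (gradient (f i) (x (σ i))) (x (σ i)) (x (σ i + 1)))
    (hstepN : ∀ t ∈ Finset.Icc 1 (T + TJ), (¬ ∃ i, σ i = t) →
      MDStepV h Q (1 / (μ * t)) (gradient g (x t)) (x t) (x (t + 1)))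
    -- the constrained minimizer x*:
    (xs : E) (hxsQ : xs ∈ Q) (hxsg : g xs ≤ 0)
    (hxsmin : ∀ y ∈ Q, g y ≤ 0 → ∑ i, f i xs ≤ ∑ i, f i y)
    -- nonnegative regret:
    (hReg : 0 ≤ ∑ i, f i (x (σ i)) - ∑ i, f i xs) :
    (∀ i, g (x (σ i)) ≤ ε) ∧
    ∃ C : ℝ, 2 < C ∧ C < 3 ∧ (TJ : ℝ) ≤ C * T ∧
      ∑ i, f i (x (σ i)) - ∑ i, f i xs ≤ M ^ 2 / μ * (1 + Real.log ((C + 1) * T)) := by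
    classical
  set N := T + TJ with hN
  have ht1 : (1:ℝ) ≤ (T:ℝ) := by exact_mod_cast hT
  have htpos : (0:ℝ) < (T:ℝ) := by linarith
  have hL0 : 0 ≤ Real.log T := Real.log_nonneg ht1
  have hε0 : 0 ≤ ε := by
    rw [hε]
    apply mul_nonneg (by positivity)
    apply div_nonneg (by linarith) (by linarith)
  have hprod : ∀ i, g (x (σ i)) ≤ ε := fun i => (hproductive (σ i) (hσrange i)).2 ⟨i, rfl⟩
  -- iterates stay in Q
  have hxQ : ∀ t, 1 ≤ t → t ≤ N + 1 → x t ∈ Q := by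
    intro t
    induction t with
    | zero => intro h1 _; omega
    | succ n ih =>
      intro _ h2
      rcases Nat.eq_zero_or_pos n with hn | hn
      · rw [hn]; exact hx1
      · have hnI : n ∈ Finset.Icc 1 N := Finset.mem_Icc.2 ⟨hn, by omega⟩
        by_cases hp : ∃ i, σ i = n
        · obtain ⟨i, hi⟩ := hp
          obtain ⟨y, _, hxQ', _⟩ := hstepP i
          rw [hi] at hxQ'
          exact hxQ'
        · obtain ⟨y, _, hxQ', _⟩ := hstepN n hnI hp
          exact hxQ'
  -- M-Lipschitzness
  have hMf : Mf ≤ M := hM ▸ le_max_left _ _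
  have hMg : Mg ≤ M := hM ▸ le_max_right _ _
  have hLipf : ∀ i, RelLipschitz h Q M (f i) := by
    intro i x' hx' y' hy'
    have h1 := hfLip i x' hx' y' hy'
    have h2 := mul_le_mul_of_nonneg_right hMf (Real.sqrt_nonneg (2 * breg h y' x'))
    linarith
  have hLipg : RelLipschitz h Q M g := by
    intro x' hx' y' hy'
    have h1 := hgLip x' hx' y' hy'
    have h2 := mul_le_mul_of_nonneg_right hMg (Real.sqrt_nonneg (2 * breg h y' x'))
    linarith
  -- per-step bound in multiplied form
  have keyineq : ∀ (φ : E → ℝ) (t : ℕ), 1 ≤ t → RelLipschitz h Q M φ → RelStrongConvex h Q μ φ →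
      x t ∈ Q → MDStepV h Q (1/(μ*t)) (gradient φ (x t)) (x t) (x (t+1)) →
      φ (x t) - φ xs ≤ μ*((t:ℝ)-1) * breg h xs (x t) - μ*t * breg h xs (x (t+1))
        + M^2/(2*μ*t) := by
    intro φ t ht1' hL hS hxt hstep
    have htR : (1:ℝ) ≤ (t:ℝ) := by exact_mod_cast ht1'
    have hμt : (0:ℝ) < μ * t := mul_pos hμ (by linarith)
    have hk := md_step_key Q hQconv h hdiff hconv φ M μ (1/(μ*t)) (by positivity) hL hS
      hxt hxsQ hstep
    have h2 := mul_le_mul_of_nonneg_left hk hμt.le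
    have hL2 : μ * (t:ℝ) * (1/(μ*(t:ℝ)) * (φ (x t) - φ xs)) = φ (x t) - φ xs := by
      field_simp
    have hR2 : μ * (t:ℝ) * ((1 - 1/(μ*(t:ℝ)) * μ) * breg h xs (x t) - breg h xs (x (t+1))
        + (1/(μ*(t:ℝ)))^2 * M^2/2)
        = μ*((t:ℝ)-1) * breg h xs (x t) - μ*t * breg h xs (x (t+1)) + M^2/(2*μ*t) := by
      field_simp
    rw [hL2, hR2] at h2
    exact h2
  -- the per-step function
  set Φ : ℕ → ℝ := fun t => if hp : ∃ i, σ i = t then f hp.choose (x t) - f hp.choose xs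
    else g (x t) - g xs with hΦdef
  set c : ℕ → ℝ := fun t => μ * t * breg h xs (x (t+1)) with hc
  have key : ∀ t ∈ Finset.Icc 1 N, Φ t ≤ (c (t-1) - c t) + M^2/(2*μ*t) := by
    intro t ht
    obtain ⟨ht1', htN⟩ := Finset.mem_Icc.1 ht
    have hxtQ : x t ∈ Q := hxQ t ht1' (by omega)
    have hct : c (t-1) = μ*((t:ℝ)-1) * breg h xs (x t) := by
      rw [hc]
      have e1 : (t-1)+1 = t := by omega
      have e2 : ((t-1 : ℕ):ℝ) = (t:ℝ)-1 := by
        push_cast [ht1']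
        ring
      simp only [e1, e2]
    by_cases hp : ∃ i, σ i = t
    · have hspec := hp.choose_spec
      have hΦt : Φ t = f hp.choose (x t) - f hp.choose xs := by
        simp only [hΦdef]; exact dif_pos hp
      have hstep' := hstepP hp.choose
      rw [hspec] at hstep'
      have hk := keyineq (f hp.choose) t ht1' (hLipf _) (hfSC _) hxtQ hstep'
      rw [hΦt, hct, hc]
      linarith
    · have hΦt : Φ t = g (x t) - g xs := by
        simp only [hΦdef]; exact dif_neg hp
      have hstep' := hstepN t ht hp
      have hk := keyineq g t ht1' hLipg hgSC hxtQ hstep'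
      rw [hΦt, hct, hc]
      linarith
  -- telescoping
  have htel : ∀ (d : ℕ → ℝ) (n : ℕ), ∑ t ∈ Finset.Icc 1 n, (d (t-1) - d t) = d 0 - d n := by
    intro d n
    induction n with
    | zero => simp
    | succ n ih =>
      rw [Finset.sum_Icc_succ_top (by omega : 1 ≤ n+1), ih]
      simp only [Nat.add_sub_cancel]
      ring
  have hc0 : c 0 = 0 := by simp [hc]
  have hcN : 0 ≤ c N := by
    apply mul_nonneg (mul_nonneg hμ.le (Nat.cast_nonneg N))
    exact breg_nonneg' h hdiff hconv _ _
  -- harmonic bound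
  have hN1 : 1 ≤ N := by omega
  have hNR1 : (1:ℝ) ≤ (N:ℝ) := by exact_mod_cast hN1
  have hharm : ∑ t ∈ Finset.Icc 1 N, M^2/(2*μ*t) ≤ M^2/(2*μ) * (1 + Real.log N) := by
    have h1 : ∑ t ∈ Finset.Icc 1 N, M^2/(2*μ*(t:ℝ)) = M^2/(2*μ) * ∑ t ∈ Finset.Icc 1 N, ((t:ℝ))⁻¹ := by
      rw [Finset.mul_sum]
      apply Finset.sum_congr rfl
      intro t _
      rw [div_eq_mul_inv, div_eq_mul_inv, show (2*μ*(t:ℝ)) = (2*μ)*(t:ℝ) by ring, mul_inv]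
      ring
    have h2 : ∑ t ∈ Finset.Icc 1 N, ((t:ℝ))⁻¹ = ((harmonic N : ℚ) : ℝ) := by
      rw [harmonic_eq_sum_Icc]
      push_cast
      rfl
    have h3 := harmonic_le_one_add_log N
    rw [h1, h2]
    apply mul_le_mul_of_nonneg_left h3 (by positivity)
  -- sum bound
  have hsumΦ : ∑ t ∈ Finset.Icc 1 N, Φ t ≤ M^2/(2*μ) * (1 + Real.log N) := by
    have h1 := Finset.sum_le_sum key
    rw [Finset.sum_add_distrib, htel c N, hc0] at h1
    linarith
  -- split the sum
  set P : Finset ℕ := Finset.image σ Finset.univ with hP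
  have hPsub : P ⊆ Finset.Icc 1 N := by
    intro t htP
    obtain ⟨i, _, rfl⟩ := Finset.mem_image.1 htP
    exact hσrange i
  have hPcard : P.card = T := by
    rw [hP, Finset.card_image_of_injective _ hσmono.injective, Finset.card_univ,
      Fintype.card_fin]
  have hsplit : ∑ t ∈ Finset.Icc 1 N \ P, Φ t + ∑ t ∈ P, Φ t = ∑ t ∈ Finset.Icc 1 N, Φ t :=
    Finset.sum_sdiff hPsub
  have hΦσ : ∀ i : Fin T, Φ (σ i) = f i (x (σ i)) - f i xs := by
    intro i
    have hp : ∃ j, σ j = σ i := ⟨i, rfl⟩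
    have h1 : Φ (σ i) = f hp.choose (x (σ i)) - f hp.choose xs := by
      simp only [hΦdef]; exact dif_pos hp
    have h2 : hp.choose = i := hσmono.injective hp.choose_spec
    rw [h1, h2]
  have hsumP : ∑ t ∈ P, Φ t = ∑ i, f i (x (σ i)) - ∑ i, f i xs := by
    rw [hP, Finset.sum_image (fun a _ b _ hab => hσmono.injective hab), ← Finset.sum_sub_distrib]
    exact Finset.sum_congr rfl (fun i _ => hΦσ i)
  have hcard_sdiff : (Finset.Icc 1 N \ P).card = TJ := by
    rw [Finset.card_sdiff_of_subset hPsub, Nat.card_Icc, hPcard]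
    omega
  have hnon : ∀ t ∈ Finset.Icc 1 N \ P, ε < Φ t := by
    intro t ht
    obtain ⟨htI, htP⟩ := Finset.mem_sdiff.1 ht
    have hnp : ¬ ∃ i, σ i = t := by
      rintro ⟨i, hi⟩
      exact htP (Finset.mem_image.2 ⟨i, Finset.mem_univ i, hi⟩)
    have hΦt : Φ t = g (x t) - g xs := by
      simp only [hΦdef]; exact dif_neg hnp
    have hgt : ¬ g (x t) ≤ ε := fun hle => hnp ((hproductive t htI).1 hle)
    push_neg at hgt
    rw [hΦt]
    linarith
  have hlow : (TJ:ℝ) * ε ≤ ∑ t ∈ Finset.Icc 1 N \ P, Φ t := by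
    have h1 := Finset.card_nsmul_le_sum (Finset.Icc 1 N \ P) Φ ε (fun t ht => (hnon t ht).le)
    rwa [hcard_sdiff, nsmul_eq_mul] at h1
  have hmain : ∑ i, f i (x (σ i)) - ∑ i, f i xs + ∑ t ∈ Finset.Icc 1 N \ P, Φ t
      ≤ M^2/(2*μ) * (1 + Real.log N) := by
    rw [← hsumP]
    linarith [hsplit, hsumΦ]
  -- TJ < 3T
  have hTJ3 : (TJ:ℝ) < 3 * T := by
    rcases Nat.eq_zero_or_pos TJ with h0 | hTJpos
    · rw [h0]; push_cast; linarith
    · have hne : (Finset.Icc 1 N \ P).Nonempty := Finset.card_pos.1 (by rw [hcard_sdiff]; omega)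
      have hstrict : (TJ:ℝ) * ε < ∑ t ∈ Finset.Icc 1 N \ P, Φ t := by
        have h1 := Finset.sum_lt_sum_of_nonempty hne hnon
        rwa [Finset.sum_const, hcard_sdiff, nsmul_eq_mul] at h1
      have h2 : (TJ:ℝ) * ε < M^2/(2*μ) * (1 + Real.log N) := by linarith
      by_contra hcon
      push_neg at hcon
      have hjR : (3:ℝ) * T ≤ TJ := hcon
      have hlogN : Real.log ((N:ℕ):ℝ) ≤ Real.log T + (TJ:ℝ)/T := by
        have hNe : ((N:ℕ):ℝ) = (T:ℝ) * (1 + (TJ:ℝ)/(T:ℝ)) := by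
          rw [hN]; push_cast; field_simp
        rw [hNe, Real.log_mul (ne_of_gt htpos) (by positivity)]
        have h4 := Real.log_le_sub_one_of_pos (show (0:ℝ) < 1 + (TJ:ℝ)/T by positivity)
        linarith
      have hA0 : (0:ℝ) ≤ M^2/μ := by positivity
      rw [hε] at h2
      have hhalf : M^2/(2*μ) = (M^2/μ)/2 := by
        rw [div_div, mul_comm]
      rw [hhalf] at h2
      -- multiply h2 by T
      have h2' : (TJ:ℝ) * (M^2/μ) * (1 + Real.log T) < (M^2/μ)/2 * (1 + Real.log N) * T := by
        have := mul_lt_mul_of_pos_right h2 htpos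
        calc (TJ:ℝ) * (M^2/μ) * (1 + Real.log T)
            = (TJ:ℝ) * (M^2/μ * ((1 + Real.log T)/T)) * T := by field_simp
          _ < (M^2/μ)/2 * (1 + Real.log N) * T := this
      have hx2 : (T:ℝ) * Real.log N ≤ (T:ℝ) * Real.log T + TJ := by
        have := mul_le_mul_of_nonneg_left hlogN htpos.le
        rw [mul_add] at this
        calc (T:ℝ) * Real.log N ≤ (T:ℝ) * Real.log T + (T:ℝ) * ((TJ:ℝ)/T) := this
          _ = (T:ℝ) * Real.log T + TJ := by field_simp
      have h6 := mul_le_mul_of_nonneg_left hx2 (show (0:ℝ) ≤ (M^2/μ)/2 by positivity)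
      have h7 : (TJ:ℝ)*(M^2/μ)*(1+Real.log T)
          < (M^2/μ)/2*(T:ℝ) + (M^2/μ)/2*((T:ℝ)*Real.log T + TJ) := by linarith
      have m1 : (M^2/μ)*(3*(T:ℝ)) ≤ (M^2/μ)*TJ := mul_le_mul_of_nonneg_left hjR hA0
      have m2 : ((M^2/μ)*Real.log T)*(3*(T:ℝ)) ≤ ((M^2/μ)*Real.log T)*TJ :=
        mul_le_mul_of_nonneg_left hjR (mul_nonneg hA0 hL0)
      have m3 : (0:ℝ) ≤ (M^2/μ)*TJ := mul_nonneg hA0 (Nat.cast_nonneg TJ)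
      have m4 : (0:ℝ) ≤ (M^2/μ)*TJ*Real.log T :=
        mul_nonneg m3 hL0
      linarith [h7, m1, m2, m3, m4]
  -- choose C
  refine ⟨hprod, max (5/2) ((TJ:ℝ)/T), lt_of_lt_of_le (by norm_num) (le_max_left _ _),
    max_lt (by norm_num) ((div_lt_iff₀ htpos).2 (by linarith)), ?_, ?_⟩
  · have h1 : (TJ:ℝ)/T ≤ max (5/2) ((TJ:ℝ)/T) := le_max_right _ _
    calc (TJ:ℝ) = ((TJ:ℝ)/T) * T := by field_simp
      _ ≤ max (5/2) ((TJ:ℝ)/T) * T := mul_le_mul_of_nonneg_right h1 htpos.le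
  · set C := max (5/2:ℝ) ((TJ:ℝ)/T) with hC
    have hC1 : (TJ:ℝ) ≤ C * T := by
      calc (TJ:ℝ) = ((TJ:ℝ)/T) * T := by field_simp
        _ ≤ C * T := mul_le_mul_of_nonneg_right (le_max_right _ _) htpos.le
    have hRegB : ∑ i, f i (x (σ i)) - ∑ i, f i xs ≤ M^2/(2*μ) * (1 + Real.log N) := by
      have h1 : (0:ℝ) ≤ (TJ:ℝ) * ε := mul_nonneg (Nat.cast_nonneg TJ) hε0
      linarith
    have hNle : ((N:ℕ):ℝ) ≤ (C+1)*T := by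
      rw [hN]; push_cast
      linarith [hC1]
    have hlog1 : Real.log ((N:ℕ):ℝ) ≤ Real.log ((C+1)*T) :=
      Real.log_le_log (by linarith) hNle
    have hlogNn : 0 ≤ Real.log ((N:ℕ):ℝ) := Real.log_nonneg hNR1
    have hd1 : M^2/(2*μ) ≤ M^2/μ := div_le_div_of_nonneg_left (by positivity) hμ (by linarith)
    calc ∑ i, f i (x (σ i)) - ∑ i, f i xs ≤ M^2/(2*μ) * (1 + Real.log N) := hRegB
      _ ≤ M^2/μ * (1 + Real.log N) := mul_le_mul_of_nonneg_right hd1 (by linarith)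
      _ ≤ M^2/μ * (1 + Real.log ((C+1)*T)) := by
          apply mul_le_mul_of_nonneg_left (by linarith) (by positivity)
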